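/- arXiv:1811.10331 — 2 statements merged into one kernel-verified Lean document; each statement's English description precedes it below -/
import Mathlib

section
/- Let x : (T_m, T_M) → ℝⁿ be locally absolutely continuous with x(t) ∈ F = C ∩ {z : Az = b} for all t, and suppose that for almost every t ∈ (T_m, T_M) the map t ↦ ∇h(x(t)) is differentiable at t with (d/dt)∇h(x(t)) + ∇f(x(t)) ∈ Im Aᵀ. Then x is of class C¹ and satisfies for every t ∈ (T_m, T_M) the equation ẋ(t) = −∇²h(x(t))⁻¹[I − Aᵀ(A∇²h(x(t))⁻¹Aᵀ)⁻¹A∇²h(x(t))⁻¹]∇f(x(t)). Conversely, any C¹ solution of this equation with values in F satisfies the above differential inclusion. -/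
noncomputable section
open Set Filter Topology Matrix MeasureTheory

abbrev E (n : ℕ) := EuclideanSpace ℝ (Fin n)

/-- Action of a matrix on a vector of `EuclideanSpace ℝ (Fin n)`. -/
def matVec {n : ℕ} (M : Matrix (Fin n) (Fin n) ℝ) (v : E n) : E n := WithLp.toLp 2 (M.mulVec v)

/-- The continuous linear map on Euclidean space associated with a matrix. -/
def matCLM {n : ℕ} (M : Matrix (Fin n) (Fin n) ℝ) : E n →L[ℝ] E n :=
  LinearMap.toContinuousLinearMap (Matrix.toEuclideanLin M)

/-- The steepest descent vector field
`x ↦ −H(x)⁻¹[I − Aᵀ(A H(x)⁻¹ Aᵀ)⁻¹ A H(x)⁻¹] g(x)` for the Hessian metric. -/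
def sdVF {n m : ℕ} (A : Matrix (Fin m) (Fin n) ℝ)
    (Hess : E n → Matrix (Fin n) (Fin n) ℝ) (g : E n → E n) (x : E n) : E n :=
  -(matVec ((Hess x)⁻¹ * (1 - Aᵀ * (A * (Hess x)⁻¹ * Aᵀ)⁻¹ * A * (Hess x)⁻¹)) (g x))

/-- The `D`-function (Bregman distance) of `h`: `D_h(a,y) = h(a) − h(y) − ⟨∇h(y), a − y⟩`. -/
def Dh {n : ℕ} (h : E n → ℝ) (a y : E n) : ℝ :=
  h a - h y - (inner ℝ (gradient h y) (a - y) : ℝ)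

/-! ### Auxiliary lemmas -/

lemma matCLM_apply {n : ℕ} (M : Matrix (Fin n) (Fin n) ℝ) (v : E n) :
    matCLM M v = matVec M v := by
  simp [matCLM, matVec, Matrix.toEuclideanLin_apply]

section Algebra

lemma B_posdef {n m : ℕ} (A : Matrix (Fin m) (Fin n) ℝ) (hrank : A.rank = m)
    (Hi : Matrix (Fin n) (Fin n) ℝ) (hHi : Hi.PosDef) : (A * Hi * Aᵀ).PosDef := by
  have hinj : ∀ z : Fin m → ℝ, Aᵀ *ᵥ z = 0 → z = 0 := by
    intro z hz
    have hker : LinearMap.ker (Aᵀ.mulVecLin) = ⊥ := by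
      have h1 := LinearMap.finrank_range_add_finrank_ker (Aᵀ.mulVecLin)
      have h2 : Aᵀ.rank = m := by rw [Matrix.rank_transpose, hrank]
      rw [Matrix.rank] at h2
      have h3 : Module.finrank ℝ (Fin m → ℝ) = m := by simp
      rw [h3, h2] at h1
      have : Module.finrank ℝ (LinearMap.ker Aᵀ.mulVecLin) = 0 := by omega
      exact Submodule.finrank_eq_zero.mp this
    have := LinearMap.ker_eq_bot.mp hker
    exact this (show Aᵀ *ᵥ z = Aᵀ *ᵥ (0 : Fin m → ℝ) by rw [hz, Matrix.mulVec_zero])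
  refine posDef_iff_dotProduct_mulVec.mpr ⟨?_, ?_⟩
  · show (A * Hi * Aᵀ)ᴴ = A * Hi * Aᵀ
    simp [conjTranspose_mul, ← conjTranspose_eq_transpose_of_trivial, Matrix.mul_assoc,
      hHi.isHermitian.eq]
  · intro z hz
    have hAz : Aᵀ *ᵥ z ≠ 0 := fun hc => hz (hinj z hc)
    have h0 := hHi.dotProduct_mulVec_pos hAz
    have heq : star z ⬝ᵥ (A * Hi * Aᵀ) *ᵥ z = star (Aᵀ *ᵥ z) ⬝ᵥ Hi *ᵥ (Aᵀ *ᵥ z) := by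
      rw [star_trivial, star_trivial, ← Matrix.mulVec_mulVec, ← Matrix.mulVec_mulVec,
        dotProduct_mulVec, ← Matrix.mulVec_transpose]
    rw [heq]; exact h0

lemma key_alg {n m : ℕ} (A : Matrix (Fin m) (Fin n) ℝ) (H : Matrix (Fin n) (Fin n) ℝ)
    (hH : IsUnit H.det) (hB : IsUnit (A * H⁻¹ * Aᵀ).det)
    (g v : Fin n → ℝ) (y : Fin m → ℝ)
    (h1 : H *ᵥ v + g = Aᵀ *ᵥ y) (h2 : A *ᵥ v = 0) :
    v = -((H⁻¹ * (1 - Aᵀ * (A * H⁻¹ * Aᵀ)⁻¹ * A * H⁻¹)) *ᵥ g) := by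
  set B := A * H⁻¹ * Aᵀ with hBdef
  have hHv : H *ᵥ v = Aᵀ *ᵥ y - g := eq_sub_of_add_eq h1
  have hv : v = H⁻¹ *ᵥ (Aᵀ *ᵥ y) - H⁻¹ *ᵥ g := by
    have : H⁻¹ *ᵥ (H *ᵥ v) = v := by
      rw [Matrix.mulVec_mulVec, Matrix.nonsing_inv_mul _ hH, Matrix.one_mulVec]
    rw [← this, hHv, Matrix.mulVec_sub]
  have hy : B *ᵥ y = (A * H⁻¹) *ᵥ g := by
    have h3 := congrArg (fun u => A *ᵥ u) hv
    simp only [h2, Matrix.mulVec_sub, Matrix.mulVec_mulVec] at h3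
    have h4 : (A * (H⁻¹ * Aᵀ)) *ᵥ y = B *ᵥ y := by
      rw [hBdef, Matrix.mul_assoc]
    rw [h4] at h3
    exact sub_eq_zero.mp h3.symm
  have hyy : y = B⁻¹ *ᵥ ((A * H⁻¹) *ᵥ g) := by
    rw [← hy, Matrix.mulVec_mulVec, Matrix.nonsing_inv_mul _ hB, Matrix.one_mulVec]
  rw [hv, hyy]
  simp only [Matrix.mul_sub, Matrix.mul_one, Matrix.sub_mulVec, neg_sub,
    Matrix.mulVec_mulVec, Matrix.mul_assoc]

lemma key_alg2 {n m : ℕ} (A : Matrix (Fin m) (Fin n) ℝ) (H : Matrix (Fin n) (Fin n) ℝ)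
    (hH : IsUnit H.det) (g : Fin n → ℝ) :
    H *ᵥ (-((H⁻¹ * (1 - Aᵀ * (A * H⁻¹ * Aᵀ)⁻¹ * A * H⁻¹)) *ᵥ g)) + g
      = Aᵀ *ᵥ (((A * H⁻¹ * Aᵀ)⁻¹ * (A * H⁻¹)) *ᵥ g) := by
  set B := A * H⁻¹ * Aᵀ with hBdef
  rw [Matrix.mulVec_neg, Matrix.mulVec_mulVec, ← Matrix.mul_assoc,
    Matrix.mul_nonsing_inv _ hH, Matrix.one_mul]
  rw [Matrix.sub_mulVec, Matrix.one_mulVec, neg_sub, sub_add_cancel]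
  simp only [Matrix.mulVec_mulVec, Matrix.mul_assoc]

end Algebra

section Lebesgue

open Metric in
lemma ae_hasDerivAt_primitive {F : Type*} [NormedAddCommGroup F] [NormedSpace ℝ F]
    [CompleteSpace F] (v : ℝ → F) (hv : Integrable v volume) (a : ℝ) :
    ∀ᵐ t, HasDerivAt (fun r => ∫ u in a..r, v u) (v t) t := by
  have hloc : LocallyIntegrable v volume := hv.locallyIntegrable
  filter_upwards [IsUnifLocDoublingMeasure.ae_tendsto_average_norm_sub volume hloc 1] with t ht
  have δlim : Tendsto (fun r : ℝ => |r - t|) (𝓝[≠] t) (𝓝[>] 0) := by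
    rw [tendsto_nhdsWithin_iff]
    constructor
    · have : ContinuousAt (fun r : ℝ => |r - t|) t := by fun_prop
      have h0 : |t - t| = 0 := by simp
      exact h0 ▸ (this.continuousWithinAt.tendsto)
    · filter_upwards [self_mem_nhdsWithin] with r hr
      exact abs_pos.mpr (sub_ne_zero.mpr hr)
  have xmem : ∀ᶠ r : ℝ in 𝓝[≠] t, t ∈ closedBall t (1 * |r - t|) := by
    filter_upwards with r
    exact mem_closedBall_self (by positivity)
  have havg := ht (fun _ : ℝ => t) (fun r => |r - t|) δlim xmem
  rw [hasDerivAt_iff_tendsto_slope]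
  rw [tendsto_iff_norm_sub_tendsto_zero]
  have hbound : ∀ᶠ r in 𝓝[≠] t, ‖slope (fun r => ∫ u in a..r, v u) t r - v t‖
      ≤ 2 * ⨍ u in closedBall t |r - t|, ‖v u - v t‖ := by
    filter_upwards [self_mem_nhdsWithin] with r (hr : r ≠ t)
    have hint : ∀ (c d : ℝ), IntervalIntegrable v volume c d := fun c d =>
      hv.intervalIntegrable
    have hFt : (∫ u in a..r, v u) - ∫ u in a..t, v u = ∫ u in t..r, v u := by
      rw [← intervalIntegral.integral_add_adjacent_intervals (hint a t) (hint t r)]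
      abel
    have hslope : slope (fun r => ∫ u in a..r, v u) t r - v t
        = (r - t)⁻¹ • (∫ u in t..r, (v u - v t)) := by
      rw [slope_def_module, hFt]
      rw [intervalIntegral.integral_sub (hint t r) (intervalIntegrable_const)]
      rw [intervalIntegral.integral_const, smul_sub, smul_smul,
        inv_mul_cancel₀ (sub_ne_zero.mpr hr), one_smul]
    rw [hslope]
    have hball : ∀ u ∈ Set.uIoc t r, u ∈ closedBall t |r - t| := by
      intro u hu
      rcases le_total t r with hc | hc
      · rw [uIoc_of_le hc] at hu
        rw [mem_closedBall, Real.dist_eq, abs_le]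
        constructor
        · linarith [abs_nonneg (r - t), hu.1.le, neg_abs_le (r - t)]
        · have : r - t ≤ |r - t| := le_abs_self _
          linarith [hu.2]
      · rw [uIoc_of_ge hc] at hu
        rw [mem_closedBall, Real.dist_eq, abs_le]
        have : -(|r - t|) ≤ r - t := neg_abs_le _
        constructor
        · linarith [hu.1.le]
        · linarith [hu.2, abs_nonneg (r - t)]
    have h1 : ‖∫ u in t..r, (v u - v t)‖ ≤ ∫ u in Set.uIoc t r, ‖v u - v t‖ :=
      intervalIntegral.norm_integral_le_integral_norm_uIoc
    have h2 : ∫ u in Set.uIoc t r, ‖v u - v t‖ ≤ ∫ u in closedBall t |r - t|, ‖v u - v t‖ := by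
      apply setIntegral_mono_set
      · exact ((hv.integrableOn.sub ((integrableOn_const_iff (C := v t)).mpr (Or.inr (by
          rw [Real.volume_closedBall]; exact ENNReal.ofReal_lt_top)))).norm)
      · exact Filter.Eventually.of_forall fun u => norm_nonneg _
      · exact HasSubset.Subset.eventuallyLE fun u hu => hball u hu
    have habs : (0:ℝ) < |r - t| := abs_pos.mpr (sub_ne_zero.mpr hr)
    have h3 : ∫ u in closedBall t |r - t|, ‖v u - v t‖
        = (2 * |r - t|) * ⨍ u in closedBall t |r - t|, ‖v u - v t‖ := by
      rw [setAverage_eq]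
      rw [Real.volume_real_closedBall (by positivity)]
      rw [smul_eq_mul, ← mul_assoc, mul_inv_cancel₀ (by positivity : (2:ℝ) * |r - t| ≠ 0),
        one_mul]
    calc ‖(r - t)⁻¹ • ∫ u in t..r, (v u - v t)‖
        = |r - t|⁻¹ * ‖∫ u in t..r, (v u - v t)‖ := by
          rw [norm_smul, norm_inv, Real.norm_eq_abs]
      _ ≤ |r - t|⁻¹ * ((2 * |r - t|) * ⨍ u in closedBall t |r - t|, ‖v u - v t‖) := by
          apply mul_le_mul_of_nonneg_left _ (by positivity)
          rw [← h3]; exact h1.trans h2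
      _ = 2 * ⨍ u in closedBall t |r - t|, ‖v u - v t‖ := by
          have he : |r - t|⁻¹ * (2 * |r - t| * (⨍ u in closedBall t |r - t|, ‖v u - v t‖))
              = 2 * ((|r - t|⁻¹ * |r - t|) * ⨍ u in closedBall t |r - t|, ‖v u - v t‖) := by
            ring
          rw [he, inv_mul_cancel₀ habs.ne', one_mul]
  exact squeeze_zero' (Filter.Eventually.of_forall fun r => norm_nonneg _) hbound
    (by simpa using havg.const_mul 2)

end Lebesgue

section Continuity

lemma gradient_continuous {nn : ℕ} (f : E nn → ℝ) (hf : ContDiff ℝ 1 f) :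
    Continuous (gradient f) := by
  have : Continuous (fun x => fderiv ℝ f x) := hf.continuous_fderiv one_ne_zero
  exact (InnerProductSpace.toDual ℝ (E nn)).symm.continuous.comp this

lemma matCLM_continuous {n : ℕ} : Continuous (fun M : Matrix (Fin n) (Fin n) ℝ => matCLM M) := by
  let L : Matrix (Fin n) (Fin n) ℝ →ₗ[ℝ] (E n →L[ℝ] E n) :=
    { toFun := matCLM
      map_add' := by
        intro M N; ext v i
        simp [matCLM]
      map_smul' := by
        intro c M; ext v i
        simp [matCLM] }
  exact L.continuous_of_finiteDimensional

lemma continuousAt_inv' {n : ℕ} (M : Matrix (Fin n) (Fin n) ℝ) (hM : IsUnit M.det) :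
    ContinuousAt (fun N : Matrix (Fin n) (Fin n) ℝ => N⁻¹) M := by
  apply continuousAt_matrix_inv
  have : ContinuousAt (fun x : ℝ => x⁻¹) M.det :=
    continuousAt_inv₀ (by simpa [isUnit_iff_ne_zero] using hM)
  exact this.congr (by
    filter_upwards with x using (Ring.inverse_eq_inv x).symm) |>.congr (by
    filter_upwards with x using rfl)

def Phi {n m : ℕ} (A : Matrix (Fin m) (Fin n) ℝ) (H : Matrix (Fin n) (Fin n) ℝ) :
    Matrix (Fin n) (Fin n) ℝ :=
  -(H⁻¹ * (1 - Aᵀ * (A * H⁻¹ * Aᵀ)⁻¹ * A * H⁻¹))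

lemma sdVF_eq {n m : ℕ} (A : Matrix (Fin m) (Fin n) ℝ) (Hess : E n → Matrix (Fin n) (Fin n) ℝ)
    (g : E n → E n) (y : E n) : sdVF A Hess g y = matCLM (Phi A (Hess y)) (g y) := by
  rw [matCLM_apply, sdVF, Phi]
  show -(matVec _ (g y)) = _
  rw [matVec, matVec, Matrix.neg_mulVec]
  rfl

lemma ContinuousAt.matmul {X : Type*} [TopologicalSpace X] {p q r : ℕ}
    {f : X → Matrix (Fin p) (Fin q) ℝ} {g : X → Matrix (Fin q) (Fin r) ℝ} {x : X}
    (hf : ContinuousAt f x) (hg : ContinuousAt g x) :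
    ContinuousAt (fun x => f x * g x) x := by
  have := ((Continuous.matrix_mul (continuous_fst) (continuous_snd)).continuousAt).comp (hf.prodMk hg)
  exact this

lemma continuousAt_Phi {n m : ℕ} (A : Matrix (Fin m) (Fin n) ℝ)
    (H : Matrix (Fin n) (Fin n) ℝ) (hH : IsUnit H.det) (hB : IsUnit (A * H⁻¹ * Aᵀ).det) :
    ContinuousAt (Phi A) H := by
  have hinv : ContinuousAt (fun N : Matrix (Fin n) (Fin n) ℝ => N⁻¹) H := continuousAt_inv' H hH
  have hBc : ContinuousAt (fun N : Matrix (Fin n) (Fin n) ℝ => (A * N⁻¹ * Aᵀ)⁻¹) H := by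
    refine ContinuousAt.comp (continuousAt_inv' _ hB) ?_
    exact (continuousAt_const.matmul hinv).matmul continuousAt_const
  apply ContinuousAt.neg
  apply ContinuousAt.matmul hinv
  apply ContinuousAt.sub continuousAt_const
  exact ((continuousAt_const.matmul hBc).matmul continuousAt_const).matmul hinv

lemma hess_entry_eq {n : ℕ} (M : Matrix (Fin n) (Fin n) ℝ) (i j : Fin n) :
    M i j = (matCLM M) (EuclideanSpace.single j (1:ℝ)) i := by
  rw [matCLM_apply, matVec]
  show M i j = M.mulVec (EuclideanSpace.single j (1:ℝ)) i
  simp [Matrix.mulVec, dotProduct, EuclideanSpace.single_apply, Finset.mul_sum]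

lemma hess_matrix_continuousOn {n : ℕ} (Hess : E n → Matrix (Fin n) (Fin n) ℝ)
    (C : Set (E n)) (hHcont : ContinuousOn (fun y => matCLM (Hess y)) C) :
    ContinuousOn (fun y => Hess y) C := by
  apply continuousOn_pi.mpr; intro i
  apply continuousOn_pi.mpr; intro j
  have : (fun y => Hess y i j) = fun y => (matCLM (Hess y)) (EuclideanSpace.single j (1:ℝ)) i := by
    funext y; exact hess_entry_eq _ i j
  rw [this]
  have hL : ContinuousOn (fun y => (matCLM (Hess y)) (EuclideanSpace.single j (1:ℝ))) C :=
    hHcont.clm_apply continuousOn_const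
  exact (EuclideanSpace.proj i).continuous.comp_continuousOn hL

lemma sdVF_continuousOn {n m : ℕ} (A : Matrix (Fin m) (Fin n) ℝ)
    (Hess : E n → Matrix (Fin n) (Fin n) ℝ) (g : E n → E n) (C : Set (E n))
    (hHcont : ContinuousOn (fun y => matCLM (Hess y)) C) (hg : Continuous g)
    (hdet : ∀ y ∈ C, IsUnit (Hess y).det)
    (hB : ∀ y ∈ C, IsUnit (A * (Hess y)⁻¹ * Aᵀ).det) :
    ContinuousOn (sdVF A Hess g) C := by
  have hHm := hess_matrix_continuousOn Hess C hHcont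
  have hPhi : ContinuousOn (fun z => matCLM (Phi A (Hess z))) C := fun y hy =>
    (matCLM_continuous.continuousAt).comp_continuousWithinAt
      ((continuousAt_Phi A (Hess y) (hdet y hy) (hB y hy)).comp_continuousWithinAt (hHm y hy))
  have : ContinuousOn (fun z => matCLM (Phi A (Hess z)) (g z)) C :=
    hPhi.clm_apply hg.continuousOn
  exact this.congr (fun y _ => sdVF_eq A Hess g y)

end Continuity

section IFT

def matCLE {n : ℕ} (M : Matrix (Fin n) (Fin n) ℝ) (hM : IsUnit M.det) : E n ≃L[ℝ] E n :=
  ContinuousLinearEquiv.equivOfInverse (matCLM M) (matCLM M⁻¹)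
    (fun v => by
      rw [matCLM_apply, matCLM_apply]
      simp only [matVec, WithLp.ofLp_toLp, Matrix.mulVec_mulVec, Matrix.nonsing_inv_mul _ hM,
        Matrix.one_mulVec, WithLp.toLp_ofLp])
    (fun v => by
      rw [matCLM_apply, matCLM_apply]
      simp only [matVec, WithLp.ofLp_toLp, Matrix.mulVec_mulVec, Matrix.mul_nonsing_inv _ hM,
        Matrix.one_mulVec, WithLp.toLp_ofLp])

lemma matCLE_symm_apply {n : ℕ} (M : Matrix (Fin n) (Fin n) ℝ) (hM : IsUnit M.det) (v : E n) :
    (matCLE M hM).symm v = matVec M⁻¹ v := by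
  show matCLM M⁻¹ v = _
  exact matCLM_apply _ _

lemma deriv_from_grad {n : ℕ} {C : Set (E n)} (hCopen : IsOpen C) (h : E n → ℝ)
    (Hess : E n → Matrix (Fin n) (Fin n) ℝ)
    (hHess : ∀ p ∈ C, HasFDerivAt (gradient h) (matCLM (Hess p)) p)
    (hHcont : ContinuousOn (fun y => matCLM (Hess y)) C)
    (hdet : ∀ p ∈ C, IsUnit (Hess p).det)
    {x : ℝ → E n} {t : ℝ} (hx : ContinuousAt x t) (hp : x t ∈ C)
    {w : E n} (hw : HasDerivAt (fun s => gradient h (x s)) w t) :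
    HasDerivAt x (matVec (Hess (x t))⁻¹ w) t := by
  set p := x t with hpdef
  have hder : ∀ᶠ y in 𝓝 p, HasFDerivAt (gradient h) ((fun z => matCLM (Hess z)) y) y := by
    filter_upwards [hCopen.mem_nhds hp] with z hz using hHess z hz
  have hstrict : HasStrictFDerivAt (gradient h) (matCLM (Hess p)) p :=
    hasStrictFDerivAt_of_hasFDerivAt_of_continuousAt hder
      ((hHcont p hp).continuousAt (hCopen.mem_nhds hp))
  have hstrict' : HasStrictFDerivAt (gradient h)
      ((matCLE (Hess p) (hdet p hp) : E n ≃L[ℝ] E n) : E n →L[ℝ] E n) p := hstrict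
  set G := hstrict'.localInverse (gradient h) _ p with hGdef
  have hGdf : HasFDerivAt G ((matCLE (Hess p) (hdet p hp)).symm : E n →L[ℝ] E n)
      (gradient h p) := hstrict'.to_localInverse.hasFDerivAt
  have hleft : ∀ᶠ z in 𝓝 p, G (gradient h z) = z := hstrict'.eventually_left_inverse
  have hev : ∀ᶠ s in 𝓝 t, G (gradient h (x s)) = x s := hx.eventually hleft
  have hcomp : HasDerivAt (fun s => G (gradient h (x s)))
      ((matCLE (Hess p) (hdet p hp)).symm w) t := by
    have := hGdf.comp_hasDerivAt t hw
    exact this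
  have : HasDerivAt x ((matCLE (Hess p) (hdet p hp)).symm w) t := by
    apply hcomp.congr_of_eventuallyEq
    filter_upwards [hev] with s hs using hs.symm
  rw [matCLE_symm_apply] at this
  exact this

lemma constraint_deriv {n m : ℕ} (A : Matrix (Fin m) (Fin n) ℝ) {x : ℝ → E n}
    {b : Fin m → ℝ} {t : ℝ} (hx : ∀ᶠ s in 𝓝 t, A.mulVec (x s) = b) {x' : E n}
    (hd : HasDerivAt x x' t) : A.mulVec x' = 0 := by
  set LA : E n →L[ℝ] EuclideanSpace ℝ (Fin m) :=
    LinearMap.toContinuousLinearMap (Matrix.toEuclideanLin A) with hLA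
  let b' : EuclideanSpace ℝ (Fin m) := WithLp.toLp 2 b
  have h1 : HasDerivAt (fun s => LA (x s)) (LA x') t := LA.hasFDerivAt.comp_hasDerivAt t hd
  have h2 : (fun s => LA (x s)) =ᶠ[𝓝 t] (fun _ => b') := by
    filter_upwards [hx] with s hs
    show Matrix.toEuclideanLin A (x s) = _
    rw [Matrix.toEuclideanLin_apply]
    exact congrArg (WithLp.toLp 2) hs
  have h3 : HasDerivAt (fun _ : ℝ => b') (LA x') t :=
    h1.congr_of_eventuallyEq h2.symm
  have h4 := (hasDerivAt_const t b').unique h3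
  have : LA x' = 0 := h4.symm
  rw [hLA] at this
  simpa [Matrix.toEuclideanLin_apply] using this

end IFT

/-- A locally absolutely continuous curve `x` with values in
`F = C ∩ {Ax = b}` satisfies the differential inclusion
`(d/dt)∇h(x(t)) + ∇f(x(t)) ∈ Im Aᵀ` a.e. if and only if it is the `C¹` solution of the
steepest descent equation
`ẋ = −∇²h(x)⁻¹[I − Aᵀ(A∇²h(x)⁻¹Aᵀ)⁻¹A∇²h(x)⁻¹]∇f(x)`. -/
theorem stmt2
    -- problem data: a full rank `m×n` matrix `A` (`m < n`), `b ∈ ℝᵐ`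
    {n m : ℕ} (hm : 0 < m) (hmn : m < n)
    (A : Matrix (Fin m) (Fin n) ℝ) (b : Fin m → ℝ) (hrank : A.rank = m)
    -- `C` is a nonempty open convex set, `F = C ∩ {x | Ax = b}` is nonempty
    (C : Set (E n)) (hCopen : IsOpen C) (hCconv : Convex ℝ C) (hCne : C.Nonempty)
    (hFne : (C ∩ {x | A.mulVec x = b}).Nonempty)
    (h : E n → ℝ) (Hess : E n → Matrix (Fin n) (Fin n) ℝ)
    -- `(H₀)`: `h` is of Legendre type with `int dom h = C`: it is strictly convex on `C`,
    -- `C²` on `C`, and its gradient blows up at the boundary of `C`;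
    -- its Hessian `Hess` is positive definite and locally Lipschitz on `C`
    (hhC2 : ContDiffOn ℝ 2 h C) (hhconv : ConvexOn ℝ C h) (hhstrict : StrictConvexOn ℝ C h)
    (hLeg : ∀ (z : ℕ → E n) (x' : E n), (∀ j, z j ∈ C) → x' ∈ frontier C →
      Tendsto z atTop (𝓝 x') → Tendsto (fun j => ‖gradient h (z j)‖) atTop atTop)
    (hHess : ∀ x ∈ C, HasFDerivAt (gradient h) (matCLM (Hess x)) x)
    (hHpos : ∀ x ∈ C, (Hess x).PosDef)
    (hHlip : ∀ x ∈ C, ∃ ε > 0, ∃ K : ℝ, ∀ y ∈ C ∩ Metric.ball x ε, ∀ z ∈ C ∩ Metric.ball x ε,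
      ‖matCLM (Hess y) - matCLM (Hess z)‖ ≤ K * ‖y - z‖)
    -- `f` is `C¹` with locally Lipschitz gradient
    (f : E n → ℝ) (hf : ContDiff ℝ 1 f)
    (hfgrad : ∀ x : E n, ∃ ε > 0, ∃ K : ℝ, ∀ y ∈ Metric.ball x ε, ∀ z ∈ Metric.ball x ε,
      ‖gradient f y - gradient f z‖ ≤ K * ‖y - z‖)
    -- the time interval and the curve
    (Tm TM : ℝ) (hT : Tm < TM) (x : ℝ → E n)
    (hmem : ∀ t ∈ Ioo Tm TM, x t ∈ C ∩ {z | A.mulVec z = b}) :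
    -- `x` is locally absolutely continuous (i.e. `x ∈ W^{1,1}_loc`) and satisfies the
    -- differential inclusion almost everywhere ...
    ((∃ v : ℝ → E n, LocallyIntegrableOn v (Ioo Tm TM) ∧
        ∀ s ∈ Ioo Tm TM, ∀ t ∈ Ioo Tm TM, x t = x s + ∫ u in s..t, v u) ∧
      (∀ᵐ t, t ∈ Ioo Tm TM →
        ∃ w : E n, HasDerivAt (fun s => gradient h (x s)) w t ∧
          ∃ y : Fin m → ℝ, w + gradient f (x t) = Aᵀ.mulVec y))
    ↔
    -- ... if and only if `x` is the `C¹` solution of `(H-SD)`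
    (∀ t ∈ Ioo Tm TM, HasDerivAt x (sdVF A Hess (gradient f) (x t)) t) := by
  -- notation
  set g : E n → E n := gradient f with hgdef
  have hC : ∀ t ∈ Ioo Tm TM, x t ∈ C := fun t ht => (hmem t ht).1
  have hAx : ∀ t ∈ Ioo Tm TM, A.mulVec (x t) = b := fun t ht => (hmem t ht).2
  -- invertibility
  have hdet : ∀ p ∈ C, IsUnit (Hess p).det := fun p hp =>
    (Matrix.isUnit_iff_isUnit_det _).mp (hHpos p hp).isUnit
  have hBdet : ∀ p ∈ C, IsUnit (A * (Hess p)⁻¹ * Aᵀ).det := fun p hp =>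
    (Matrix.isUnit_iff_isUnit_det _).mp (B_posdef A hrank _ (hHpos p hp).inv).isUnit
  -- continuity of the Hessian (as CLM-valued map) on C
  have hHcont : ContinuousOn (fun y => matCLM (Hess y)) C := by
    intro p hp
    obtain ⟨ε, hε, K, hK⟩ := hHlip p hp
    set K' : NNReal := ⟨max K 0, le_max_right _ _⟩ with hK'
    have hLip : LipschitzOnWith K' (fun y => matCLM (Hess y)) (C ∩ Metric.ball p ε) := by
      apply LipschitzOnWith.of_dist_le_mul
      intro y hy z hz
      rw [dist_eq_norm]
      calc ‖matCLM (Hess y) - matCLM (Hess z)‖ ≤ K * ‖y - z‖ := hK y hy z hz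
        _ ≤ (K' : ℝ) * ‖y - z‖ := by
            apply mul_le_mul_of_nonneg_right (le_max_left _ _) (norm_nonneg _)
        _ = (K' : ℝ) * dist y z := by rw [dist_eq_norm]
    have h1 : ContinuousWithinAt (fun y => matCLM (Hess y)) (C ∩ Metric.ball p ε) p :=
      hLip.continuousOn p ⟨hp, Metric.mem_ball_self hε⟩
    exact h1.mono_of_mem_nhdsWithin (inter_mem_nhdsWithin C (Metric.ball_mem_nhds p hε))
  -- continuity of gradient f
  have hgc : Continuous g := gradient_continuous f hf
  -- continuity of the vector field on C
  have hsd : ContinuousOn (sdVF A Hess g) C :=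
    sdVF_continuousOn A Hess g C hHcont hgc hdet hBdet
  -- helper : continuity of t ↦ sdVF (x t) from continuity of x
  have hs_cont_of : (∀ t ∈ Ioo Tm TM, ContinuousAt x t) →
      ContinuousOn (fun t => sdVF A Hess g (x t)) (Ioo Tm TM) := by
    intro hxc t ht
    exact ((hsd (x t) (hC t ht)).continuousAt
      (hCopen.mem_nhds (hC t ht))).comp_continuousWithinAt (hxc t ht).continuousWithinAt
  constructor
  · -- forward direction
    rintro ⟨⟨v, hvint, hvrep⟩, hae⟩
    -- continuity of x on Ioo
    have hxc : ∀ t ∈ Ioo Tm TM, ContinuousAt x t := by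
      intro t₀ ht₀
      obtain ⟨a, haT, hat⟩ := exists_between ht₀.1
      obtain ⟨c, htc, hcT⟩ := exists_between ht₀.2
      have hIccsub : Icc a c ⊆ Ioo Tm TM := fun u hu =>
        ⟨lt_of_lt_of_le haT hu.1, lt_of_le_of_lt hu.2 hcT⟩
      have hac : a ≤ c := le_of_lt (lt_trans hat htc)
      have hint : IntegrableOn v (uIcc a c) volume := by
        rw [uIcc_of_le hac]
        exact hvint.integrableOn_compact_subset hIccsub isCompact_Icc
      have hprim : ContinuousOn (fun r => ∫ u in a..r, v u) (uIcc a c) :=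
        intervalIntegral.continuousOn_primitive_interval hint
      have haI : a ∈ Ioo Tm TM := hIccsub (left_mem_Icc.mpr hac)
      have hec : ∀ r ∈ Ioo a c, x r = x a + ∫ u in a..r, v u := fun r hr =>
        hvrep a haI r (hIccsub ⟨hr.1.le, hr.2.le⟩)
      have hcc : ContinuousAt (fun r => x a + ∫ u in a..r, v u) t₀ := by
        apply ContinuousAt.add continuousAt_const
        apply hprim.continuousAt
        rw [uIcc_of_le hac]
        exact Icc_mem_nhds hat htc
      apply hcc.congr
      filter_upwards [Ioo_mem_nhds hat htc] with r hr using (hec r hr).symm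
    have hs_cont := hs_cont_of hxc
    -- a.e. the ODE holds
    have hae2 : ∀ᵐ t, t ∈ Ioo Tm TM → HasDerivAt x (sdVF A Hess g (x t)) t := by
      filter_upwards [hae] with t ht htI
      obtain ⟨w, hw, y, hy⟩ := ht htI
      have hp : x t ∈ C := hC t htI
      have hx' : HasDerivAt x (matVec (Hess (x t))⁻¹ w) t :=
        deriv_from_grad hCopen h Hess hHess hHcont hdet (hxc t htI) hp hw
      have hax : ∀ᶠ s in 𝓝 t, A.mulVec (x s) = b := by
        filter_upwards [Ioo_mem_nhds htI.1 htI.2] with s hs using hAx s hs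
      have hAz : A.mulVec (matVec (Hess (x t))⁻¹ w) = 0 := constraint_deriv A hax hx'
      -- algebra
      have h1 : Hess (x t) *ᵥ ((Hess (x t))⁻¹ *ᵥ (w : Fin n → ℝ))
          + (show Fin n → ℝ from g (x t)) = Aᵀ *ᵥ y := by
        have he : Hess (x t) *ᵥ ((Hess (x t))⁻¹ *ᵥ (w : Fin n → ℝ)) = w := by
          rw [Matrix.mulVec_mulVec, Matrix.mul_nonsing_inv _ (hdet _ hp), Matrix.one_mulVec]
        rw [he]
        exact hy
      have hAz' : A *ᵥ ((Hess (x t))⁻¹ *ᵥ (w : Fin n → ℝ)) = 0 := hAz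
      have h2 : ((Hess (x t))⁻¹ *ᵥ (w : Fin n → ℝ))
          = -(((Hess (x t))⁻¹ * (1 - Aᵀ * (A * (Hess (x t))⁻¹ * Aᵀ)⁻¹ * A * (Hess (x t))⁻¹))
              *ᵥ (show Fin n → ℝ from g (x t))) :=
        key_alg A (Hess (x t)) (hdet _ hp) (hBdet _ hp) _ _ y h1 hAz'
      have h3 : matVec (Hess (x t))⁻¹ w = sdVF A Hess g (x t) := by
        rw [matVec, h2]
        rfl
      rw [← h3]
      exact hx'
    -- upgrade to everywhere
    intro t₀ ht₀
    obtain ⟨a', ha'T, ha't⟩ := exists_between ht₀.1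
    obtain ⟨b', htb', hb'T⟩ := exists_between ht₀.2
    obtain ⟨a, ha'a, hat⟩ := exists_between ha't
    obtain ⟨c, htc, hcb'⟩ := exists_between htb'
    have ha'b' : Icc a' b' ⊆ Ioo Tm TM := fun u hu =>
      ⟨lt_of_lt_of_le ha'T hu.1, lt_of_le_of_lt hu.2 hb'T⟩
    have hIoosub : Ioo a' b' ⊆ Ioo Tm TM := fun u hu => ha'b' ⟨hu.1.le, hu.2.le⟩
    have haI : a ∈ Ioo Tm TM := hIoosub ⟨ha'a, lt_trans (lt_trans hat htc) hcb'⟩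
    have haI' : a ∈ Ioo a' b' := ⟨ha'a, lt_trans (lt_trans hat htc) hcb'⟩
    -- truncated v
    set vt : ℝ → E n := (Ioo a' b').indicator v with hvtdef
    have hvt : Integrable vt volume := by
      have : IntegrableOn v (Ioo a' b') volume :=
        (hvint.integrableOn_compact_subset ha'b' isCompact_Icc).mono_set Ioo_subset_Icc_self
      exact (integrable_indicator_iff measurableSet_Ioo).mpr this
    have hxeq : ∀ r ∈ Ioo a' b', x r = x a + ∫ u in a..r, vt u := by
      intro r hr
      rw [hvrep a haI r (hIoosub hr)]
      congr 1
      apply intervalIntegral.integral_congr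
      intro u hu
      have huI : u ∈ Ioo a' b' := by
        rcases hu with ⟨h1, h2⟩
        constructor
        · calc a' < min a r := lt_min haI'.1 hr.1
            _ ≤ u := h1
        · calc u ≤ max a r := h2
            _ < b' := max_lt haI'.2 hr.2
      exact (indicator_of_mem huI v).symm
    -- a.e. equality of v with the vector field
    have hvs : ∀ᵐ u, u ∈ Ioo a' b' → vt u = sdVF A Hess g (x u) := by
      filter_upwards [ae_hasDerivAt_primitive vt hvt a, hae2] with u h1 h2 hu
      have hxdu : HasDerivAt x (vt u) u := by
        have hprim : HasDerivAt (fun r => x a + ∫ s in a..r, vt s) (vt u) u :=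
          (h1.const_add (x a))
        apply hprim.congr_of_eventuallyEq
        filter_upwards [Ioo_mem_nhds hu.1 hu.2] with r hr using hxeq r hr
      exact hxdu.unique (h2 (hIoosub hu))
    -- the integral representation with the vector field
    have hs_int : ∀ r ∈ Ioo a' b', x r = x a + ∫ u in a..r, sdVF A Hess g (x u) := by
      intro r hr
      rw [hxeq r hr]
      congr 1
      apply intervalIntegral.integral_congr_ae
      filter_upwards [hvs] with u hu huI
      apply hu
      rcases le_total a r with hc | hc
      · rw [uIoc_of_le hc] at huI
        exact ⟨lt_trans haI'.1 huI.1, lt_of_le_of_lt huI.2 hr.2⟩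
      · rw [uIoc_of_ge hc] at huI
        exact ⟨lt_trans hr.1 huI.1, lt_of_le_of_lt huI.2 haI'.2⟩
    -- FTC
    have ht₀I : t₀ ∈ Ioo a' b' := ⟨ha't, htb'⟩
    have hsub2 : uIcc a t₀ ⊆ Ioo Tm TM := by
      rw [uIcc_of_le hat.le]
      intro u hu
      exact ⟨lt_of_lt_of_le haI.1 hu.1, lt_of_le_of_lt hu.2 ht₀.2⟩
    have hFTC : HasDerivAt (fun r => ∫ u in a..r, sdVF A Hess g (x u)) (sdVF A Hess g (x t₀))
        t₀ := by
      apply intervalIntegral.integral_hasDerivAt_right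
      · exact (hs_cont.mono hsub2).intervalIntegrable
      · exact ContinuousOn.stronglyMeasurableAtFilter isOpen_Ioo hs_cont t₀ ht₀
      · exact (hs_cont t₀ ht₀).continuousAt (Ioo_mem_nhds ht₀.1 ht₀.2)
    have : HasDerivAt (fun r => x a + ∫ u in a..r, sdVF A Hess g (x u))
        (sdVF A Hess g (x t₀)) t₀ := hFTC.const_add (x a)
    apply this.congr_of_eventuallyEq
    filter_upwards [Ioo_mem_nhds ht₀I.1 ht₀I.2] with r hr using hs_int r hr
  · -- reverse direction
    intro hode
    have hxc : ∀ t ∈ Ioo Tm TM, ContinuousAt x t := fun t ht => (hode t ht).continuousAt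
    have hs_cont := hs_cont_of hxc
    constructor
    · refine ⟨fun t => sdVF A Hess g (x t), ?_, ?_⟩
      · exact hs_cont.locallyIntegrableOn measurableSet_Ioo
      · intro s hs t ht
        have hsub : uIcc s t ⊆ Ioo Tm TM := by
          rcases le_total s t with hc | hc
          · rw [uIcc_of_le hc]
            exact fun u hu => ⟨lt_of_lt_of_le hs.1 hu.1, lt_of_le_of_lt hu.2 ht.2⟩
          · rw [uIcc_of_ge hc]
            exact fun u hu => ⟨lt_of_lt_of_le ht.1 hu.1, lt_of_le_of_lt hu.2 hs.2⟩
        have := intervalIntegral.integral_eq_sub_of_hasDerivAt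
          (fun u hu => hode u (hsub hu)) ((hs_cont.mono hsub).intervalIntegrable)
        rw [this]
        abel
    · apply Filter.Eventually.of_forall
      intro t ht
      have hp : x t ∈ C := hC t ht
      refine ⟨matVec (Hess (x t)) (sdVF A Hess g (x t)), ?_, ?_⟩
      · have := (hHess (x t) hp).comp_hasDerivAt t (hode t ht)
        rw [matCLM_apply] at this
        exact this
      · refine ⟨((A * (Hess (x t))⁻¹ * Aᵀ)⁻¹ * (A * (Hess (x t))⁻¹)) *ᵥ (g (x t)), ?_⟩
        have := key_alg2 A (Hess (x t)) (hdet _ hp) (g (x t))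
        exact this
end
end

section
/- Suppose f(x) = ⟨c, x⟩ is linear and let x : [0, T) → F be a C¹ solution of the steepest descent equation ẋ(t) = −∇²h(x(t))⁻¹[I − Aᵀ(A∇²h(x(t))⁻¹Aᵀ)⁻¹A∇²h(x(t))⁻¹]c with x(0) = x⁰ ∈ F. Then for every t ∈ (0, T), x(t) minimizes the function z ↦ ⟨c, z⟩ + (1/t) D_h(z, x⁰) over the set {z ∈ dom h : Az = b}; that is, ⟨c, x(t)⟩ + (1/t) D_h(x(t), x⁰) ≤ ⟨c, z⟩ + (1/t) D_h(z, x⁰) for all z ∈ dom h with Az = b. -/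
noncomputable section
open Set Filter Topology Matrix MeasureTheory

section Aux

variable {n m : ℕ}

lemma matVec_neg (M : Matrix (Fin n) (Fin n) ℝ) (v : E n) :
    matVec M (-v) = -matVec M v := (matCLM M).map_neg v

lemma matVec_matVec (M N : Matrix (Fin n) (Fin n) ℝ) (v : E n) :
    matVec M (matVec N v) = matVec (M * N) v := congrArg (WithLp.toLp 2) (Matrix.mulVec_mulVec v.ofLp M N)

lemma matVec_sub' (M N : Matrix (Fin n) (Fin n) ℝ) (v : E n) :
    matVec (M - N) v = matVec M v - matVec N v := congrArg (WithLp.toLp 2) (Matrix.sub_mulVec M N v.ofLp)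

lemma matVec_one (v : E n) : matVec 1 v = v := congrArg (WithLp.toLp 2) (Matrix.one_mulVec v.ofLp)

lemma matCLM_eq_matVec (M : Matrix (Fin n) (Fin n) ℝ) (v : E n) :
    matCLM M v = matVec M v := rfl

lemma innerE_eq_dot (u v : E n) : (inner ℝ u v : ℝ) = u ⬝ᵥ v := by
  simp [PiLp.inner_apply, dotProduct, mul_comm]

lemma mulVecE_sub (A : Matrix (Fin m) (Fin n) ℝ) (u w : E n) :
    A.mulVec (u - w) = A.mulVec u - A.mulVec w := Matrix.mulVec_sub A u w

lemma gradient_inner_eq (f : E n → ℝ) (y w : E n) :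
    (inner ℝ (gradient f y) w : ℝ) = fderiv ℝ f y w := by
  rw [gradient]; exact InnerProductSpace.toDual_symm_apply

/-- The image of the steepest-descent vector field under the Hessian. -/
lemma sdVF_image (A : Matrix (Fin m) (Fin n) ℝ)
    (Hess : E n → Matrix (Fin n) (Fin n) ℝ) (c : E n) (y : E n)
    (hpd : (Hess y).PosDef) :
    matCLM (Hess y) (sdVF A Hess (fun _ => c) y)
      = -c + matVec (Aᵀ * (A * (Hess y)⁻¹ * Aᵀ)⁻¹ * A * (Hess y)⁻¹) c := by
  have hinv : Hess y * (Hess y)⁻¹ = 1 :=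
    Matrix.mul_nonsing_inv _ (isUnit_iff_ne_zero.2 hpd.det_pos.ne')
  rw [matCLM_eq_matVec, sdVF, matVec_neg, matVec_matVec, ← Matrix.mul_assoc, hinv,
    Matrix.one_mul, matVec_sub', matVec_one, neg_sub]
  abel

/-- Gradient inequality for a convex function. -/
lemma convex_grad_ineq {s : Set (E n)} {f : E n → ℝ} {f' : E n →L[ℝ] ℝ}
    (hf : ConvexOn ℝ s f) {a z : E n} (ha : a ∈ s) (hz : z ∈ s)
    (hd : HasFDerivAt f f' a) : f' (z - a) ≤ f z - f a := by
  set φ : ℝ → ℝ := fun r => f (a + r • (z - a)) with hφ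
  have hline : HasDerivAt (fun r : ℝ => a + r • (z - a)) (z - a) 0 := by
    simpa using ((hasDerivAt_id (0:ℝ)).smul_const (z - a)).const_add a
  have hderiv : HasDerivAt φ (f' (z - a)) 0 := by
    have : HasFDerivAt f f' (a + (0:ℝ) • (z - a)) := by simpa using hd
    exact this.comp_hasDerivAt 0 hline
  have hslope : ∀ᶠ r in 𝓝[>] (0:ℝ), slope φ 0 r ≤ f z - f a := by
    filter_upwards [Ioc_mem_nhdsGT_of_mem (Set.left_mem_Ico.2 zero_lt_one)] with r hr
    have hr0 : 0 < r := hr.1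
    have hr1 : r ≤ 1 := hr.2
    have hcvx := hf.2 ha hz (by linarith : (0:ℝ) ≤ 1 - r) hr0.le (by ring)
    have heq : (1 - r) • a + r • z = a + r • (z - a) := by
      simp [smul_sub, sub_smul]; abel
    rw [heq] at hcvx
    have : φ r - φ 0 ≤ r * (f z - f a) := by
      simp only [hφ]; simp only [zero_smul, add_zero]
      calc f (a + r • (z - a)) - f a ≤ ((1-r) * f a + r * f z) - f a := by
              have := hcvx; rw [smul_eq_mul, smul_eq_mul] at this; linarith
        _ = r * (f z - f a) := by ring
    rw [slope_def_field, sub_zero, div_le_iff₀ hr0]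
    linarith [this]
  have htend : Tendsto (slope φ 0) (𝓝[>] (0:ℝ)) (𝓝 (f' (z - a))) :=
    ((hasDerivAt_iff_tendsto_slope.1 hderiv).mono_left
      (nhdsWithin_mono 0 fun r hr => ne_of_gt hr))
  exact le_of_tendsto htend hslope

lemma arith_final (t Cz Cx Cv Gv P Q Pv hz hxt h0 : ℝ) (ht : 0 < t)
    (e1 : Cz - Cx = Cv) (e2 : P - Q = Pv) (key : Pv = Gv + t * Cv)
    (hgi : Gv ≤ hz - hxt) :
    Cx + 1/t * (hxt - h0 - Q) ≤ Cz + 1/t * (hz - h0 - P) := by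
  rw [← sub_nonneg]
  have hP : P = Q + Gv + t * Cv := by linarith
  have hCz : Cz = Cx + Cv := by linarith
  have egoal : Cz + 1/t * (hz - h0 - P) - (Cx + 1/t * (hxt - h0 - Q))
      = 1/t * (hz - hxt - Gv) := by
    rw [hP, hCz]; field_simp; ring
  rw [egoal]
  exact mul_nonneg (by positivity) (by linarith)

end Aux

/-- For a linear objective `f(x) = ⟨c,x⟩`, the steepest descent
trajectory is a viscosity path: for every `t ∈ (0,T)`, `x(t)` minimizes
`z ↦ ⟨c,z⟩ + D_h(z,x⁰)/t` over `{z ∈ dom h : Az = b}` (here `dom h = cl C`). -/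
theorem stmt3
    -- problem data: a full rank `m×n` matrix `A` (`m < n`), `b ∈ ℝᵐ`
    {n m : ℕ} (hm : 0 < m) (hmn : m < n)
    (A : Matrix (Fin m) (Fin n) ℝ) (b : Fin m → ℝ) (hrank : A.rank = m)
    -- `C` is a nonempty open convex set, `F = C ∩ {x | Ax = b}` is nonempty
    (C : Set (E n)) (hCopen : IsOpen C) (hCconv : Convex ℝ C) (hCne : C.Nonempty)
    (hFne : (C ∩ {x | A.mulVec x = b}).Nonempty)
    (h : E n → ℝ) (Hess : E n → Matrix (Fin n) (Fin n) ℝ)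
    -- `(H₀)`: `h` is of Legendre type with `int dom h = C`: it is strictly convex on `C`,
    -- `C²` on `C`, and its gradient blows up at the boundary of `C`;
    -- its Hessian `Hess` is positive definite and locally Lipschitz on `C`
    (hhC2 : ContDiffOn ℝ 2 h C) (hhconv : ConvexOn ℝ C h) (hhstrict : StrictConvexOn ℝ C h)
    (hLeg : ∀ (z : ℕ → E n) (x' : E n), (∀ j, z j ∈ C) → x' ∈ frontier C →
      Tendsto z atTop (𝓝 x') → Tendsto (fun j => ‖gradient h (z j)‖) atTop atTop)
    (hHess : ∀ x ∈ C, HasFDerivAt (gradient h) (matCLM (Hess x)) x)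
    (hHpos : ∀ x ∈ C, (Hess x).PosDef)
    (hHlip : ∀ x ∈ C, ∃ ε > 0, ∃ K : ℝ, ∀ y ∈ C ∩ Metric.ball x ε, ∀ z ∈ C ∩ Metric.ball x ε,
      ‖matCLM (Hess y) - matCLM (Hess z)‖ ≤ K * ‖y - z‖)
    -- here `dom h = cl C`: `h` is convex (hence finite) on `cl C`
    (hhconvcl : ConvexOn ℝ (closure C) h) (hhcontcl : ContinuousOn h (closure C))
    -- linear objective function
    (c : E n)
    -- the trajectory: a `C¹` solution of `(H-SD)` on `[0,T)` with values in `F`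
    (T : ℝ) (hT : 0 < T) (x : ℝ → E n) (x0 : E n)
    (hx0 : x 0 = x0) (hx0F : x0 ∈ C ∩ {z | A.mulVec z = b})
    (hmem : ∀ t ∈ Ico 0 T, x t ∈ C ∩ {z | A.mulVec z = b})
    (hode : ∀ t ∈ Ico 0 T, HasDerivAt x (sdVF A Hess (fun _ => c) (x t)) t) :
    ∀ t ∈ Ioo 0 T, ∀ z ∈ closure C, A.mulVec z = b →
      (inner ℝ c (x t) : ℝ) + (1 / t) * Dh h (x t) x0 ≤
        (inner ℝ c z : ℝ) + (1 / t) * Dh h z x0 := by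
  intro t ht z hzcl hAz
  have hxt := hmem t ⟨ht.1.le, ht.2⟩
  set v : E n := z - x t with hv
  have hAv : A.mulVec v = 0 := by
    rw [hv, show (z - x t).ofLp = z.ofLp - (x t).ofLp from rfl, mulVecE_sub, hAz, hxt.2]; simp
  -- derivative of s ↦ ⟪∇h(x s), v⟫ + s⟪c, v⟫ vanishes on [0, t]
  set q : ℝ → ℝ := fun s => (inner ℝ (gradient h (x s)) v : ℝ) + s * (inner ℝ c v : ℝ) with hq
  have hqderiv : ∀ s ∈ Icc 0 t, HasDerivAt q 0 s := by
    intro s hs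
    have hs' : s ∈ Ico 0 T := ⟨hs.1, lt_of_le_of_lt hs.2 ht.2⟩
    have hmem' := hmem s hs'
    have hG : HasDerivAt (fun s => gradient h (x s))
        (matCLM (Hess (x s)) (sdVF A Hess (fun _ => c) (x s))) s :=
      (hHess (x s) hmem'.1).comp_hasDerivAt s (hode s hs')
    have h1 : HasDerivAt (fun s => (inner ℝ (gradient h (x s)) v : ℝ))
        ((inner ℝ (matCLM (Hess (x s)) (sdVF A Hess (fun _ => c) (x s))) v : ℝ)) s := by
      simpa using HasDerivAt.inner ℝ hG (hasDerivAt_const s v)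
    have h2 : HasDerivAt (fun s : ℝ => s * (inner ℝ c v : ℝ)) (inner ℝ c v : ℝ) s :=
      hasDerivAt_mul_const _
    have hDzero : (inner ℝ (matCLM (Hess (x s)) (sdVF A Hess (fun _ => c) (x s))) v : ℝ)
        = -(inner ℝ c v : ℝ) := by
      rw [sdVF_image A Hess c (x s) (hHpos (x s) hmem'.1), inner_add_left, inner_neg_left]
      have hassoc : Aᵀ * (A * (Hess (x s))⁻¹ * Aᵀ)⁻¹ * A * (Hess (x s))⁻¹
          = Aᵀ * ((A * (Hess (x s))⁻¹ * Aᵀ)⁻¹ * (A * (Hess (x s))⁻¹)) := by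
        rw [Matrix.mul_assoc, Matrix.mul_assoc]
      have hzero : (inner ℝ (matVec (Aᵀ * (A * (Hess (x s))⁻¹ * Aᵀ)⁻¹ * A * (Hess (x s))⁻¹) c)
          v : ℝ) = 0 := by
        rw [innerE_eq_dot]
        show ((Aᵀ * (A * (Hess (x s))⁻¹ * Aᵀ)⁻¹ * A * (Hess (x s))⁻¹) *ᵥ c) ⬝ᵥ v = 0
        rw [hassoc, ← Matrix.mulVec_mulVec, Matrix.mulVec_transpose,
          ← Matrix.dotProduct_mulVec, hAv, dotProduct_zero]
      rw [hzero]; ring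
    have := (h1.add h2)
    rw [hDzero] at this
    exact this.congr_deriv (neg_add_cancel _)
  have hcont : ContinuousOn q (Icc 0 t) := fun s hs =>
    ((hqderiv s hs).continuousAt.continuousWithinAt)
  have hconst := constant_of_has_deriv_right_zero hcont
    (fun s hs => (hqderiv s ⟨hs.1, hs.2.le⟩).hasDerivWithinAt)
  have hqt : q t = q 0 := hconst t (right_mem_Icc.2 ht.1.le)
  have key : (inner ℝ (gradient h x0) v : ℝ)
      = (inner ℝ (gradient h (x t)) v : ℝ) + t * (inner ℝ c v : ℝ) := by
    have := hqt
    simp only [hq, hx0, zero_mul, add_zero] at this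
    linarith
  -- gradient inequality at x t
  have hdiff : DifferentiableAt ℝ h (x t) :=
    (hhC2.contDiffAt (hCopen.mem_nhds hxt.1)).differentiableAt (by norm_num)
  have hgi := convex_grad_ineq hhconvcl (subset_closure hxt.1) hzcl hdiff.hasFDerivAt
  have hgi' : (inner ℝ (gradient h (x t)) v : ℝ) ≤ h z - h (x t) := by
    rw [hv, gradient_inner_eq]; exact hgi
  -- final arithmetic
  have e1 : (inner ℝ c z : ℝ) - (inner ℝ c (x t) : ℝ) = (inner ℝ c v : ℝ) := by
    rw [hv, inner_sub_right]
  have e2 : (inner ℝ (gradient h x0) (z - x0) : ℝ) - (inner ℝ (gradient h x0) (x t - x0) : ℝ)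
      = (inner ℝ (gradient h x0) v : ℝ) := by
    rw [← inner_sub_right, hv]; congr 1; abel
  simp only [Dh]
  exact arith_final t _ _ _ _ _ _ _ _ _ _ ht.1 e1 e2 key hgi'
end
end
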